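/- For every positive integer k, every signed graph (G, σ) in which every triangle is positive (equivalently, with no induced subgraph switching equivalent to the all-negative triangle (K_3, −)) and whose underlying graph G contains no induced path on k + 2 vertices satisfies χ_b(G, σ) < 2^k. -/

import Mathlib

open SimpleGraph

namespace SignedGS

variable {V : Type*}

/-- The sign of a walk in a signed graph: the product of the signs of its edges. -/
def walkSign {G : SimpleGraph V} (σ : Sym2 V → ℤˣ) {u v : V} (w : G.Walk u v) : ℤˣ :=
  (w.edges.map σ).prod

/-- `X` is a balanced set of `(G, σ)`: every cycle of the subgraph induced on `X`
is positive. -/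
def IsBalancedSet (G : SimpleGraph V) (σ : Sym2 V → ℤˣ) (X : Set V) : Prop :=
  ∀ ⦃v : V⦄ (w : G.Walk v v), w.IsCycle → (∀ u ∈ w.support, u ∈ X) → walkSign σ w = 1

/-- `(G, σ)` can be covered by `n` balanced sets. -/
def BalancedColorable (G : SimpleGraph V) (σ : Sym2 V → ℤˣ) (n : ℕ) : Prop :=
  ∃ f : V → Fin n, ∀ i : Fin n, IsBalancedSet G σ {v | f v = i}

/-- The balanced chromatic number of `(G, σ)`. -/
noncomputable def balancedChromNum (G : SimpleGraph V) (σ : Sym2 V → ℤˣ) : ℕ :=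
  sInf {n | BalancedColorable G σ n}

/-- The set `X ⊆ V` can be covered by `n` sets each of which is balanced in `(G, σ)`. -/
def BalancedColorableOn (G : SimpleGraph V) (σ : Sym2 V → ℤˣ) (X : Set V) (n : ℕ) : Prop :=
  ∃ f : V → Fin n, ∀ i : Fin n, IsBalancedSet G σ {v | v ∈ X ∧ f v = i}

/-- The balanced chromatic number of the signed subgraph of `(G, σ)` induced on `X`. -/
noncomputable def balancedChromNumOn (G : SimpleGraph V) (σ : Sym2 V → ℤˣ) (X : Set V) : ℕ :=
  sInf {n | BalancedColorableOn G σ X n}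

/-- `(G, σ)⁻` : the spanning subgraph of `G` consisting of the negative edges. -/
def negSubgraph (G : SimpleGraph V) (σ : Sym2 V → ℤˣ) : SimpleGraph V where
  Adj u v := G.Adj u v ∧ σ s(u, v) = -1
  symm := by
    constructor
    intro u v h
    refine ⟨h.1.symm, ?_⟩
    rw [Sym2.eq_swap]
    exact h.2
  loopless := by constructor; intro v h; exact G.irrefl h.1

/-- Two signatures on `G` are switching equivalent. -/
def SwitchEquiv (G : SimpleGraph V) (σ σ' : Sym2 V → ℤˣ) : Prop :=
  ∃ η : V → ℤˣ, ∀ u v : V, G.Adj u v → σ' s(u, v) = η u * σ s(u, v) * η v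

/-- Every triangle of `(G, σ)` is positive. -/
def AllTrianglesPositive (G : SimpleGraph V) (σ : Sym2 V → ℤˣ) : Prop :=
  ∀ u v w : V, G.Adj u v → G.Adj v w → G.Adj u w →
    σ s(u, v) * σ s(v, w) * σ s(u, w) = 1

/-- `G` contains an induced copy of `F`. -/
def HasInducedCopy {W : Type*} (F : SimpleGraph W) (G : SimpleGraph V) : Prop :=
  ∃ f : W ↪ V, ∀ a b : W, G.Adj (f a) (f b) ↔ F.Adj a b

/-- The star `K_{1,m}` with center `0` and `m` leaves. -/
def starGraph (m : ℕ) : SimpleGraph (Fin (m + 1)) where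
  Adj a b := (a = 0 ∨ b = 0) ∧ a ≠ b
  symm := by constructor; rintro a b ⟨h1, h2⟩; exact ⟨h1.symm, h2.symm⟩
  loopless := by constructor; rintro a ⟨_, h⟩; exact h rfl

private def disjUnionAdj {W1 W2 : Type*} (F1 : SimpleGraph W1) (F2 : SimpleGraph W2) :
    W1 ⊕ W2 → W1 ⊕ W2 → Prop
  | .inl x, .inl y => F1.Adj x y
  | .inr x, .inr y => F2.Adj x y
  | _, _ => False

/-- The disjoint union `F1 + F2` of two graphs. -/
def disjUnion {W1 W2 : Type*} (F1 : SimpleGraph W1) (F2 : SimpleGraph W2) :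
    SimpleGraph (W1 ⊕ W2) where
  Adj := disjUnionAdj F1 F2
  symm := by
    constructor
    rintro (x | x) (y | y) h
    · exact F1.adj_symm h
    · exact h.elim
    · exact h.elim
    · exact F2.adj_symm h
  loopless := by
    constructor
    rintro (x | x) h
    · exact F1.irrefl h
    · exact F2.irrefl h

private def fullJoinAdj {W1 W2 : Type*} (G1 : SimpleGraph W1) (G2 : SimpleGraph W2) :
    W1 ⊕ W2 → W1 ⊕ W2 → Prop
  | .inl x, .inl y => G1.Adj x y
  | .inr x, .inr y => G2.Adj x y
  | _, _ => True

/-- The full join `G1 ⋈ G2` of two vertex-disjoint graphs. -/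
def fullJoin {W1 W2 : Type*} (G1 : SimpleGraph W1) (G2 : SimpleGraph W2) :
    SimpleGraph (W1 ⊕ W2) where
  Adj := fullJoinAdj G1 G2
  symm := by
    constructor
    rintro (x | x) (y | y) h
    · exact G1.adj_symm h
    · trivial
    · trivial
    · exact G2.adj_symm h
  loopless := by
    constructor
    rintro (x | x) h
    · exact G1.irrefl h
    · exact G2.irrefl h

/-- The linear forest with `l` components, the `i`-th component being a path
on `m i` vertices. -/
def linearForest (l : ℕ) (m : Fin l → ℕ) : SimpleGraph (Σ i : Fin l, Fin (m i)) where
  Adj a b := a.1 = b.1 ∧ ((a.2 : ℕ) + 1 = (b.2 : ℕ) ∨ (b.2 : ℕ) + 1 = (a.2 : ℕ))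
  symm := by constructor; rintro a b ⟨h1, h2⟩; exact ⟨h1.symm, h2.symm⟩
  loopless := by constructor; rintro a ⟨_, h⟩; omega

/-- `(G, σ)` has an induced subgraph switching equivalent to the all-negative `K_4`. -/
def HasSwitchK4Neg (G : SimpleGraph V) (σ : Sym2 V → ℤˣ) : Prop :=
  ∃ f : Fin 4 ↪ V, (∀ a b : Fin 4, a ≠ b → G.Adj (f a) (f b)) ∧
    ∃ η : Fin 4 → ℤˣ, ∀ a b : Fin 4, a ≠ b → η a * σ s(f a, f b) * η b = -1

/-- `(G, σ)` has a triangle all of whose edges are negative. -/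
def HasNegTriangle (G : SimpleGraph V) (σ : Sym2 V → ℤˣ) : Prop :=
  ∃ u v w : V, G.Adj u v ∧ G.Adj v w ∧ G.Adj u w ∧
    σ s(u, v) = -1 ∧ σ s(v, w) = -1 ∧ σ s(u, w) = -1

/-- `(G, σ)` has four vertices inducing a copy of `(K_4, M)`: a complete graph on four
vertices whose negative edges form a perfect matching. -/
def HasK4M (G : SimpleGraph V) (σ : Sym2 V → ℤˣ) : Prop :=
  ∃ a b c d : V, a ≠ b ∧ a ≠ c ∧ a ≠ d ∧ b ≠ c ∧ b ≠ d ∧ c ≠ d ∧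
    G.Adj a b ∧ G.Adj a c ∧ G.Adj a d ∧ G.Adj b c ∧ G.Adj b d ∧ G.Adj c d ∧
    σ s(a, b) = -1 ∧ σ s(c, d) = -1 ∧
    σ s(a, c) = 1 ∧ σ s(a, d) = 1 ∧ σ s(b, c) = 1 ∧ σ s(b, d) = 1

/-- The vertices of the shift graph `S_{k,n}`: strictly increasing `k`-sequences
with values in `{1, …, n}`. -/
def ShiftVertex (k n : ℕ) : Type :=
  {s : Fin k → ℕ // StrictMono s ∧ ∀ i, s i ∈ Finset.Icc 1 n}

/-- `b` is obtained from `a` by shifting: `b = (a_2, …, a_k, t)` for some `t`. -/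
def ShiftFollows {k n : ℕ} (a b : ShiftVertex k n) : Prop :=
  ∀ (i : ℕ) (h : i + 1 < k), b.1 ⟨i, Nat.lt_of_succ_lt h⟩ = a.1 ⟨i + 1, h⟩

/-- The shift graph `S_{k,n}`. -/
def shiftGraph (k n : ℕ) : SimpleGraph (ShiftVertex k n) where
  Adj a b := a ≠ b ∧ (ShiftFollows a b ∨ ShiftFollows b a)
  symm := by constructor; rintro a b ⟨h1, h2⟩; exact ⟨h1.symm, h2.symm⟩
  loopless := by constructor; rintro a ⟨h, _⟩; exact h rfl




/-! ### Auxiliary machinery -/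

/-- The spanning subgraph of `G` keeping only edges inside `A`. -/
def gx (G : SimpleGraph V) (A : Set V) : SimpleGraph V where
  Adj x y := G.Adj x y ∧ x ∈ A ∧ y ∈ A
  symm := ⟨fun _ _ h => ⟨h.1.symm, h.2.2, h.2.1⟩⟩
  loopless := ⟨fun x h => G.irrefl h.1⟩

lemma walkSign_cons {G : SimpleGraph V} (σ : Sym2 V → ℤˣ) {a b c : V} (h : G.Adj a b)
    (w : G.Walk b c) : walkSign σ (Walk.cons h w) = σ s(a, b) * walkSign σ w := by
  simp [walkSign, Walk.edges_cons]

lemma sign_near [DecidableEq V] {G : SimpleGraph V} {σ : Sym2 V → ℤˣ} (h1 : AllTrianglesPositive G σ) (v : V) :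
    ∀ {a b : V} (w : G.Walk a b), (∀ u ∈ w.support, u = v ∨ G.Adj v u) →
      walkSign σ w = (if a = v then 1 else σ s(v, a)) * (if b = v then 1 else σ s(v, b)) := by
  intro a b w
  induction w with
  | nil =>
      intro _
      simp only [walkSign, Walk.edges_nil, List.map_nil, List.prod_nil]
      split_ifs with h
      · rw [mul_one]
      · rw [Int.units_mul_self]
  | @cons a c b h' w ih =>
      intro hs
      have hrest := ih (fun u hu => hs u (by simp [Walk.support_cons, hu]))
      rw [walkSign_cons, hrest, ← mul_assoc]
      congr 1
      have hc : c = v ∨ G.Adj v c := hs c (by simp [Walk.support_cons, w.start_mem_support])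
      have ha : a = v ∨ G.Adj v a := hs a (by simp [Walk.support_cons])
      by_cases hav : a = v
      · have hcv : ¬ c = v := by
          intro hcv
          rw [hav, hcv] at h'
          exact G.irrefl h'
        rw [if_pos hav, if_neg hcv, hav, Int.units_mul_self]
      · by_cases hcv : c = v
        · rw [if_neg hav, if_pos hcv, hcv, mul_one, Sym2.eq_swap]
        · rw [if_neg hav, if_neg hcv]
          have hva : G.Adj v a := ha.resolve_left hav
          have hvc : G.Adj v c := hc.resolve_left hcv
          have e := h1 v a c hva h' hvc
          have e2 : σ s(v, a) * (σ s(v, a) * σ s(a, c) * σ s(v, c)) = σ s(v, a) := by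
            rw [e, mul_one]
          rw [← mul_assoc, ← mul_assoc, Int.units_mul_self, one_mul] at e2
          exact e2

lemma balanced_near [DecidableEq V] {G : SimpleGraph V} {σ : Sym2 V → ℤˣ} (h1 : AllTrianglesPositive G σ)
    (v : V) (S : Set V) (hS : ∀ u ∈ S, u = v ∨ G.Adj v u) : IsBalancedSet G σ S := by
  intro a w _ hsupp
  rw [sign_near h1 v w (fun u hu => hS u (hsupp u hu))]
  by_cases hav : a = v
  · simp [hav]
  · simp [hav, Int.units_mul_self]

lemma reach_in {G H : SimpleGraph V} (hHG : ∀ ⦃x y : V⦄, H.Adj x y → G.Adj x y) {A : Set V} :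
    ∀ {a b : V} (w : H.Walk a b), (∀ u ∈ w.support, u ∈ A) → (gx G A).Reachable a b := by
  intro a b w
  induction w with
  | nil => exact fun _ => Reachable.refl _
  | @cons a c b h' w ih =>
      intro hs
      have ha : a ∈ A := hs _ (by simp [Walk.support_cons])
      have hcA : c ∈ A := hs _ (by simp [Walk.support_cons, w.start_mem_support])
      have hadj : (gx G A).Adj a c := ⟨hHG h', ha, hcA⟩
      exact hadj.reachable.trans (ih (fun u hu => hs u (by simp [Walk.support_cons, hu])))

lemma mem_of_gx_reach {G : SimpleGraph V} {A : Set V} :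
    ∀ {r y : V}, (gx G A).Reachable r y → r ∈ A → y ∈ A := by
  intro r y h
  obtain ⟨w⟩ := h
  induction w with
  | nil => exact id
  | cons h' _ ih => exact fun _ => ih h'.2.2

lemma reach_support {H : SimpleGraph V} {a b u : V} (w : H.Walk a b) (hu : u ∈ w.support) :
    H.Reachable a u := by
  classical
  exact ⟨w.takeUntil u hu⟩

lemma goodList_copy {G : SimpleGraph V} (d : V) (L : List V) (n : ℕ) (hn : L.length = n)
    (h1 : ∀ i, i + 1 < L.length → G.Adj (L.getD i d) (L.getD (i+1) d))
    (h2 : ∀ i j, i + 2 ≤ j → j < L.length → ¬ G.Adj (L.getD i d) (L.getD j d))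
    (h3 : ∀ i j, i < j → j < L.length → L.getD i d ≠ L.getD j d) :
    HasInducedCopy (pathGraph n) G := by
  subst hn
  refine ⟨⟨fun i => L.getD i d, ?_⟩, ?_⟩
  · intro i j hij
    by_contra hne
    have hne' : (i : ℕ) ≠ (j : ℕ) := fun h => hne (Fin.ext h)
    rcases Nat.lt_or_ge (i : ℕ) (j : ℕ) with h | h
    · exact h3 i j h j.isLt hij
    · exact h3 j i (by omega) i.isLt hij.symm
  · intro a b
    rw [pathGraph_adj]
    constructor
    · intro hadj
      by_contra hc
      push_neg at hc
      rcases Nat.lt_trichotomy (a : ℕ) (b : ℕ) with h | h | h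
      · exact h2 a b (by omega) b.isLt hadj
      · have hab : a = b := Fin.ext h
        rw [hab] at hadj
        exact G.irrefl hadj
      · exact h2 b a (by omega) a.isLt hadj.symm
    · rintro (h | h)
      · have := h1 (a : ℕ) (by omega)
        rwa [h] at this
      · have := h1 (b : ℕ) (by omega)
        rw [h] at this
        exact this.symm

lemma find_link {G : SimpleGraph V} {C W : Set V} {v : V}
    (hWiff : ∀ c, c ∈ W ↔ (c ∈ C ∧ c ≠ v ∧ ¬ G.Adj v c)) :
    ∀ {a t : V} (w : (gx G C).Walk a t) {r : V}, a ∈ W → (gx G W).Reachable r a →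
      ((t ∈ W ∧ (gx G W).Reachable r t) ∨
        ∃ v' y : V, v' ∈ C ∧ G.Adj v v' ∧ y ∈ W ∧ (gx G W).Reachable r y ∧
          G.Adj v' y) := by
  intro a t w
  induction w with
  | nil => exact fun ha hra => Or.inl ⟨ha, hra⟩
  | @cons a b _ h' w ihw =>
      intro r ha hra
      by_cases hb : b ∈ W
      · exact ihw hb (hra.trans (Adj.reachable ⟨h'.1, ha, hb⟩))
      · have hbC : b ∈ C := h'.2.2
        have hbalt : b = v ∨ G.Adj v b := by
          by_contra hcon
          push_neg at hcon
          exact hb ((hWiff b).2 ⟨hbC, hcon.1, hcon.2⟩)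
        rcases hbalt with hbv | hvb
        · rw [hbv] at h'
          exact absurd h'.1.symm ((hWiff a).1 ha).2.2
        · exact Or.inr ⟨b, a, hbC, hvb, ha, hra, h'.1.symm⟩


lemma claim [Fintype V] [DecidableEq V] {G : SimpleGraph V} {σ : Sym2 V → ℤˣ} (k : ℕ)
    (h1 : AllTrianglesPositive G σ)
    (h2 : ¬ HasInducedCopy (pathGraph (k + 2)) G) (d : V) :
    ∀ (n : ℕ) (C : Set V), C.ncard ≤ n → ∀ (v : V) (P : List V),
      P.length < k → v ∈ C →
      (∀ x ∈ C, (gx G C).Reachable x v) →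
      (∀ i, i + 1 < (v :: P).length →
        G.Adj ((v :: P).getD i d) ((v :: P).getD (i+1) d)) →
      (∀ i j, i + 2 ≤ j → j < (v :: P).length →
        ¬ G.Adj ((v :: P).getD i d) ((v :: P).getD j d)) →
      (∀ i j, i < j → j < (v :: P).length → (v :: P).getD i d ≠ (v :: P).getD j d) →
      (∀ j, 1 ≤ j → j < (v :: P).length → ∀ c ∈ C, c ≠ v →
        ¬ G.Adj ((v :: P).getD j d) c) →
      (∀ j, 1 ≤ j → j < (v :: P).length → (v :: P).getD j d ∉ C) →
      BalancedColorableOn G σ C (k - P.length) := by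
  intro n
  induction n with
  | zero =>
      intro C hC v P _ hv _ _ _ _ _ _
      have hCe : C = ∅ := by
        rw [← Set.ncard_eq_zero (Set.toFinite C)]
        omega
      rw [hCe] at hv
      exact absurd hv (Set.notMem_empty v)
  | succ n ih =>
      intro C hC v P hlen hv hconn g1 g2 g3 g4 g5
      classical
      set W : Set V := {c | c ∈ C ∧ c ≠ v ∧ ¬ G.Adj v c} with hWdef
      have hWC : ∀ c ∈ W, c ∈ C := fun c hc => hc.1
      by_cases hW : W = ∅
      · refine ⟨fun _ => ⟨0, by omega⟩, fun i => ?_⟩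
        refine balanced_near h1 v _ (fun u hu => ?_)
        by_contra hcon
        push_neg at hcon
        have huW : u ∈ W := ⟨hu.1, hcon.1, hcon.2⟩
        rw [hW] at huW
        exact huW
      · have hWiff : ∀ c, c ∈ W ↔ (c ∈ C ∧ c ≠ v ∧ ¬ G.Adj v c) := fun c => Iff.rfl
        have find : ∀ (r : V), r ∈ W → (gx G C).Walk r v →
            ∃ v' y : V, v' ∈ C ∧ G.Adj v v' ∧ y ∈ W ∧ (gx G W).Reachable r y ∧
              G.Adj v' y := by
          intro r hrW w
          rcases find_link hWiff w hrW (Reachable.refl r) with hbad | hgood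
          · exact absurd rfl ((hWiff v).1 hbad.1).2.1
          · exact hgood
        obtain ⟨r, hr⟩ := Set.nonempty_iff_ne_empty.2 hW
        by_cases hlen2 : P.length + 1 < k
        swap
        · -- contradiction: build an induced path on k + 2 vertices
          exfalso
          obtain ⟨w⟩ := hconn r (hWC r hr)
          obtain ⟨v', y, hv'C, hvv', hyW, -, hv'y⟩ := find r hr w
          have hv'v : v' ≠ v := hvv'.ne'
          set L : List V := y :: v' :: v :: P with hL
          have hLlen : L.length = k + 2 := by
            simp only [hL, List.length_cons]
            omega
          refine h2 (goodList_copy d L (k + 2) hLlen ?_ ?_ ?_)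
          · intro i hi
            match i with
            | 0 => exact hv'y.symm
            | 1 => exact hvv'.symm
            | (i+2) =>
                simp only [hL, List.getD_cons_succ]
                refine g1 i ?_
                simp only [hL, List.length_cons] at hi ⊢
                omega
          · intro i j hij hj
            match i, j with
            | 0, (j+1) =>
                simp only [hL, List.getD_cons_zero, List.getD_cons_succ]
                match j, hij with
                | (j+1), _ =>
                  simp only [List.getD_cons_succ]
                  match j with
                  | 0 => exact fun h => hyW.2.2 h.symm
                  | (j+1) =>
                      intro h
                      refine g4 (j+1) (by omega) ?_ y (hWC y hyW) hyW.2.1 h.symm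
                      simp only [List.length_cons] at hj ⊢
                      omega
            | 1, (j+3) =>
                simp only [hL, List.getD_cons_succ]
                intro h
                refine g4 (j+1) (by omega) ?_ v' hv'C hv'v h.symm
                simp only [hL, List.length_cons] at hj ⊢
                omega
            | (i+2), (j+4) =>
                simp only [hL, List.getD_cons_succ]
                refine g2 i (j+2) (by omega) ?_
                simp only [hL, List.length_cons] at hj ⊢
                omega
          · intro i j hij hj
            match i, j with
            | 0, 1 =>
                simp only [hL, List.getD_cons_zero, List.getD_cons_succ]
                intro h
                rw [← h] at hvv'
                exact hyW.2.2 hvv'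
            | 0, 2 =>
                simp only [hL, List.getD_cons_zero, List.getD_cons_succ]
                exact hyW.2.1
            | 0, (j+3) =>
                intro h
                have h5 : (v :: P).getD (j+1) d ∉ C := by
                  refine g5 (j+1) (by omega) ?_
                  simp only [List.length_cons] at hj ⊢
                  omega
                have hyC : L.getD 0 d ∈ C := hWC y hyW
                rw [h] at hyC
                exact h5 hyC
            | 1, 2 =>
                simp only [hL, List.getD_cons_succ, List.getD_cons_zero]
                exact hv'v
            | 1, (j+3) =>
                intro h
                have h5 : (v :: P).getD (j+1) d ∉ C := by
                  refine g5 (j+1) (by omega) ?_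
                  simp only [List.length_cons] at hj ⊢
                  omega
                have hyC : L.getD 1 d ∈ C := hv'C
                rw [h] at hyC
                exact h5 hyC
            | (i+2), (j+3) =>
                simp only [hL, List.getD_cons_succ]
                refine g3 i (j+1) (by omega) ?_
                simp only [hL, List.length_cons] at hj ⊢
                omega
        · -- recursive case
          have key : ∀ r' : V, ∃ p : V × (V → Fin (k - (P.length + 1))),
              r' ∈ W → p.1 ∈ C ∧ G.Adj v p.1 ∧
                ∀ i, IsBalancedSet G σ
                  {u | u ∈ ({z | (gx G W).Reachable r' z} ∪ {p.1}) ∧ p.2 u = i} := by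
            intro r'
            by_cases hr' : r' ∈ W
            swap
            · exact ⟨(v, fun _ => ⟨0, by omega⟩), fun h => absurd h hr'⟩
            obtain ⟨w⟩ := hconn r' (hWC r' hr')
            obtain ⟨v', y, hv'C, hvv', hyW, hry, hv'y⟩ := find r' hr' w
            set D : Set V := {z | (gx G W).Reachable r' z} with hD
            have hDW : ∀ z ∈ D, z ∈ W := fun z hz => mem_of_gx_reach hz hr'
            set C' : Set V := D ∪ {v'} with hC'
            have hv'v : v' ≠ v := hvv'.ne'
            have hC'sub : ∀ z ∈ C', z ∈ C ∧ z ≠ v := by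
              intro z hz
              rcases hz with hz | hz
              · exact ⟨hWC z (hDW z hz), (hDW z hz).2.1⟩
              · rw [Set.mem_singleton_iff] at hz
                rw [hz]
                exact ⟨hv'C, hv'v⟩
            have hcard : C'.ncard ≤ n := by
              have hs1 : C' ⊆ C \ {v} := fun z hz => ⟨(hC'sub z hz).1, (hC'sub z hz).2⟩
              have hl1 := Set.ncard_le_ncard hs1 (Set.toFinite _)
              have hl2 := Set.ncard_diff_singleton_lt_of_mem hv (Set.toFinite C)
              omega
            have hyD : y ∈ D := hry
            have hv'Cm : v' ∈ C' := Or.inr rfl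
            have hconn' : ∀ x ∈ C', (gx G C').Reachable x v' := by
              intro x hx
              rcases hx with hx | hx
              · have hrx : (gx G W).Reachable r' x := hx
                obtain ⟨wxy⟩ := (hrx.symm.trans hry : (gx G W).Reachable x y)
                have hsupp : ∀ u ∈ wxy.support, u ∈ C' :=
                  fun u hu => Or.inl (hrx.trans (reach_support wxy hu))
                have hxy : (gx G C').Reachable x y :=
                  reach_in (G := G) (H := gx G W) (fun _ _ h => h.1) wxy hsupp
                exact hxy.trans (Adj.reachable ⟨hv'y.symm, Or.inl hyD, Or.inr rfl⟩)
              · rw [Set.mem_singleton_iff] at hx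
                rw [hx]
            have hg1 : ∀ i, i + 1 < (v' :: v :: P).length →
                G.Adj ((v' :: v :: P).getD i d) ((v' :: v :: P).getD (i+1) d) := by
              intro i hi
              match i with
              | 0 => exact hvv'.symm
              | (i+1) =>
                  simp only [List.getD_cons_succ]
                  refine g1 i ?_
                  simp only [List.length_cons] at hi ⊢
                  omega
            have hg2 : ∀ i j, i + 2 ≤ j → j < (v' :: v :: P).length →
                ¬ G.Adj ((v' :: v :: P).getD i d) ((v' :: v :: P).getD j d) := by
              intro i j hij hj
              match i, j with
              | 0, (j+2) =>
                  simp only [List.getD_cons_zero, List.getD_cons_succ]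
                  intro h
                  refine g4 (j+1) (by omega) ?_ v' hv'C hv'v h.symm
                  simp only [List.length_cons] at hj ⊢
                  omega
              | (i+1), (j+3) =>
                  simp only [List.getD_cons_succ]
                  refine g2 i (j+2) (by omega) ?_
                  simp only [List.length_cons] at hj ⊢
                  omega
            have hg3 : ∀ i j, i < j → j < (v' :: v :: P).length →
                (v' :: v :: P).getD i d ≠ (v' :: v :: P).getD j d := by
              intro i j hij hj
              match i, j with
              | 0, 1 =>
                  simp only [List.getD_cons_zero, List.getD_cons_succ]
                  exact hv'v
              | 0, (j+2) =>
                  intro h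
                  have h5 : (v :: P).getD (j+1) d ∉ C := by
                    refine g5 (j+1) (by omega) ?_
                    simp only [List.length_cons] at hj ⊢
                    omega
                  have hyC : (v' :: v :: P).getD 0 d ∈ C := hv'C
                  rw [h] at hyC
                  exact h5 hyC
              | (i+1), (j+2) =>
                  simp only [List.getD_cons_succ]
                  refine g3 i (j+1) (by omega) ?_
                  simp only [List.length_cons] at hj ⊢
                  omega
            have hg4 : ∀ j, 1 ≤ j → j < (v' :: v :: P).length → ∀ c ∈ C', c ≠ v' →
                ¬ G.Adj ((v' :: v :: P).getD j d) c := by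
              intro j hj1 hj2 c hc hcv'
              have hcW : c ∈ W := by
                rcases hc with hc | hc
                · exact hDW c hc
                · rw [Set.mem_singleton_iff] at hc
                  exact absurd hc hcv'
              match j, hj1 with
              | (j+1), _ =>
                simp only [List.getD_cons_succ]
                match j with
                | 0 => exact hcW.2.2
                | (j+1) =>
                    refine g4 (j+1) (by omega) ?_ c (hWC c hcW) hcW.2.1
                    simp only [List.length_cons] at hj2 ⊢
                    omega
            have hg5 : ∀ j, 1 ≤ j → j < (v' :: v :: P).length →
                (v' :: v :: P).getD j d ∉ C' := by
              intro j hj1 hj2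
              match j, hj1 with
              | (j+1), _ =>
                simp only [List.getD_cons_succ]
                match j with
                | 0 =>
                    intro h
                    rcases h with h | h
                    · exact (hDW v h).2.1 rfl
                    · rw [Set.mem_singleton_iff] at h
                      exact hv'v h.symm
                | (j+1) =>
                    intro h
                    refine g5 (j+1) (by omega) ?_ (hC'sub _ h).1
                    simp only [List.length_cons] at hj2 ⊢
                    omega
            obtain ⟨f, hf⟩ := ih C' hcard v' (v :: P) hlen2 hv'Cm hconn' hg1 hg2 hg3 hg4 hg5
            exact ⟨(v', f), fun _ => ⟨hv'C, hvv', hf⟩⟩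
          choose pick hpick using key
          set rep : V → V := fun u => Quot.out ((gx G W).connectedComponentMk u) with hrepdef
          have hrep1 : ∀ u, (gx G W).Reachable (rep u) u := fun u =>
            ConnectedComponent.exact (Quot.out_eq _)
          have hrep2 : ∀ u u', (gx G W).Reachable u u' → rep u = rep u' := fun u u' h =>
            congrArg Quot.out (ConnectedComponent.sound h)
          have hrepW : ∀ u ∈ W, rep u ∈ W := fun u hu =>
            mem_of_gx_reach (hrep1 u).symm hu
          have hmm : k - P.length = (k - (P.length + 1)) + 1 := by omega
          rw [hmm]
          refine ⟨fun u => if u ∈ W then Fin.succ ((pick (rep u)).2 u) else 0, fun i => ?_⟩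
          refine Fin.cases ?_ ?_ i
          · refine balanced_near h1 v _ (fun u hu => ?_)
            obtain ⟨huC, hu0⟩ := hu
            have hu0' : (if u ∈ W then Fin.succ ((pick (rep u)).2 u) else 0) = 0 := hu0
            by_cases huW : u ∈ W
            · rw [if_pos huW] at hu0'
              exact absurd hu0' (Fin.succ_ne_zero _)
            · by_contra hcon
              push_neg at hcon
              exact huW ⟨huC, hcon.1, hcon.2⟩
          · intro j a w hcyc hsupp
            have hmem : ∀ u ∈ w.support, u ∈ W ∧ (pick (rep u)).2 u = j := by
              intro u hu
              obtain ⟨huC, hval⟩ := hsupp u hu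
              have hval' : (if u ∈ W then Fin.succ ((pick (rep u)).2 u) else 0)
                  = Fin.succ j := hval
              by_cases huW : u ∈ W
              · rw [if_pos huW] at hval'
                exact ⟨huW, Fin.succ_injective _ hval'⟩
              · rw [if_neg huW] at hval'
                exact absurd hval'.symm (Fin.succ_ne_zero j)
            have haW : a ∈ W := (hmem a w.start_mem_support).1
            have hρW : rep a ∈ W := hrepW a haW
            have hrepconst : ∀ u ∈ w.support, rep u = rep a := by
              intro u hu
              have hwalk : (gx G W).Reachable a u := by
                refine reach_in (G := G) (H := G) (fun _ _ h => h) (w.takeUntil u hu) ?_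
                intro z hz
                exact (hmem z (Walk.support_takeUntil_subset w hu hz)).1
              exact (hrep2 a u hwalk).symm
            obtain ⟨hpC, hpAdj, hpBal⟩ := hpick (rep a) hρW
            refine hpBal j w hcyc ?_
            intro u hu
            obtain ⟨huW, hval⟩ := hmem u hu
            constructor
            · left
              have hru : (gx G W).Reachable u (rep u) := (hrep1 u).symm
              rw [hrepconst u hu] at hru
              exact hru.symm
            · rw [← hrepconst u hu]
              exact hval

/-- triangle-positive, induced-P_{k+2}-free signed graphs have
χ_b < 2^k. -/
theorem stmt11 {V : Type*} [Fintype V] (k : ℕ) (hk : 0 < k)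
    (G : SimpleGraph V) (σ : Sym2 V → ℤˣ)
    (h1 : AllTrianglesPositive G σ)
    (h2 : ¬ HasInducedCopy (pathGraph (k + 2)) G) :
    balancedChromNum G σ < 2 ^ k := by
  classical
  have hcol : BalancedColorable G σ k := by
    by_cases hV : Nonempty V
    swap
    · exact ⟨fun u => absurd ⟨u⟩ hV, fun i a w _ _ => absurd ⟨a⟩ hV⟩
    obtain ⟨d⟩ := hV
    have key : ∀ r : V, ∃ f : V → Fin k,
        ∀ i, IsBalancedSet G σ {u | u ∈ {y | G.Reachable r y} ∧ f u = i} := by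
      intro r
      have hconn : ∀ x ∈ {y | G.Reachable r y},
          (gx G {y | G.Reachable r y}).Reachable x r := by
        intro x hx
        obtain ⟨w⟩ := (hx : G.Reachable r x)
        have hsup : ∀ u ∈ w.support, u ∈ {y | G.Reachable r y} :=
          fun u hu => reach_support w hu
        exact (reach_in (G := G) (H := G) (fun _ _ h => h) w hsup).symm
      have hcl := claim k h1 h2 d ({y | G.Reachable r y}).ncard {y | G.Reachable r y}
        le_rfl r [] hk (Reachable.refl r) hconn
        (by intro i hi; simp only [List.length_cons, List.length_nil] at hi; omega)
        (by intro i j hij hj; simp only [List.length_cons, List.length_nil] at hj; omega)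
        (by intro i j hij hj; simp only [List.length_cons, List.length_nil] at hj; omega)
        (by intro j hj1 hj2; simp only [List.length_cons, List.length_nil] at hj2; omega)
        (by intro j hj1 hj2; simp only [List.length_cons, List.length_nil] at hj2; omega)
      exact hcl
    choose F hF using key
    set rep : V → V := fun u => Quot.out (G.connectedComponentMk u) with hrepdef
    have hrep1 : ∀ u, G.Reachable (rep u) u := fun u =>
      ConnectedComponent.exact (Quot.out_eq _)
    refine ⟨fun u => F (rep u) u, fun i => ?_⟩
    intro a w hcyc hsupp
    have hconst : ∀ u ∈ w.support, rep u = rep a := fun u hu =>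
      (congrArg Quot.out (ConnectedComponent.sound (reach_support w hu))).symm
    refine hF (rep a) i w hcyc (fun u hu => ?_)
    refine ⟨(hrep1 a).trans (reach_support w hu), ?_⟩
    have hval : F (rep u) u = i := hsupp u hu
    rw [hconst u hu] at hval
    exact hval
  exact lt_of_le_of_lt (Nat.sInf_le hcol) (Nat.lt_two_pow_self)

end SignedGS
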